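/- Suppose P0, P1 : ℕ → ℝ satisfy the steady-state CME of the generalized ON-OFF model with rate functions K1, K2, K3 : ℕ → ℝ, and set P(n) = P0(n) + P1(n). Then for every n ≥ 1, P(n+1) = [K3(n)/(n+1)]·P(n) + [K3(n)/(n+1)]·Σ_{i=0}^{n−1} [K2(i)/(i+1)]·P(i)·∏_{j=i+1}^{n−1} (j + K1(j) + K2(j))/(j+1) − [K3(n)/(n+1)!]·P0(0)·∏_{i=0}^{n−1}(i + K1(i) + K2(i)). -/
import Mathlib

open Finset

private noncomputable def Aprod (K1 K2 : ℕ → ℝ) (n : ℕ) : ℝ :=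
  ∏ i ∈ Finset.range n, ((i : ℝ) + K1 i + K2 i)

private noncomputable def Ssum (K1 K2 P : ℕ → ℝ) (n : ℕ) : ℝ :=
  ∑ i ∈ Finset.range n, (K2 i / ((i : ℝ) + 1)) * P i *
    ∏ j ∈ Finset.Icc (i + 1) (n - 1), (((j : ℝ) + K1 j + K2 j) / ((j : ℝ) + 1))

theorem cme_P_iteration (K1 K2 K3 P0 P1 P : ℕ → ℝ)
    (hCME0 : ∀ n : ℕ,
      -K1 n * P0 n + K2 n * P1 n + ((n : ℝ) + 1) * P0 (n + 1) - (n : ℝ) * P0 n = 0)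
    (hCME1 : ∀ n : ℕ,
      K1 n * P0 n - K2 n * P1 n + (if n = 0 then 0 else K3 (n - 1) * P1 (n - 1))
        - K3 n * P1 n + ((n : ℝ) + 1) * P1 (n + 1) - (n : ℝ) * P1 n = 0)
    (hP : ∀ n : ℕ, P n = P0 n + P1 n) :
    ∀ n : ℕ, 1 ≤ n →
      P (n + 1) = (K3 n / ((n : ℝ) + 1)) * P n
        + (K3 n / ((n : ℝ) + 1)) * ∑ i ∈ Finset.range n, (K2 i / ((i : ℝ) + 1)) * P i *
            ∏ j ∈ Finset.Icc (i + 1) (n - 1), (((j : ℝ) + K1 j + K2 j) / ((j : ℝ) + 1))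
        - (K3 n / ((n + 1).factorial : ℝ)) * P0 0 *
            ∏ i ∈ Finset.range n, ((i : ℝ) + K1 i + K2 i) := by
  -- Step 1: telescoping the sum of the two equations gives (n+1)P(n+1) = K3 n * P1 n
  have h1 : ∀ n : ℕ, ((n : ℝ) + 1) * P (n + 1) = K3 n * P1 n := by
    intro n
    induction n with
    | zero =>
      have e0 := hCME0 0
      have e1 := hCME1 0
      rw [if_pos rfl] at e1
      have hp := hP 1
      push_cast at *
      linarith
    | succ m ih =>
      have e0 := hCME0 (m + 1)
      have e1 := hCME1 (m + 1)
      rw [if_neg (Nat.succ_ne_zero m)] at e1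
      simp only [Nat.add_sub_cancel] at e1
      have hp1 := hP (m + 1)
      have hp2 := hP (m + 1 + 1)
      push_cast at *
      linear_combination e0 + e1 + ih + ((m : ℝ) + 1 + 1) * hp2 - ((m : ℝ) + 1) * hp1
  -- Recursion for the sum S
  have hSrec : ∀ m : ℕ, Ssum K1 K2 P (m + 1)
      = (((m : ℝ) + K1 m + K2 m) / ((m : ℝ) + 1)) * Ssum K1 K2 P m
        + (K2 m / ((m : ℝ) + 1)) * P m := by
    intro m
    cases m with
    | zero => simp [Ssum]
    | succ k =>
      unfold Ssum
      rw [Finset.sum_range_succ]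
      have hempty : Finset.Icc (k + 1 + 1) (k + 1 + 1 - 1) = ∅ :=
        Finset.Icc_eq_empty (by omega)
      rw [hempty]
      simp only [Nat.add_sub_cancel, Finset.prod_empty]
      rw [Finset.mul_sum]
      have hcong : ∀ i ∈ Finset.range (k + 1),
          (K2 i / ((i : ℝ) + 1)) * P i *
            ∏ j ∈ Finset.Icc (i + 1) (k + 1), (((j : ℝ) + K1 j + K2 j) / ((j : ℝ) + 1))
          = ((((k : ℝ) + 1) + K1 (k + 1) + K2 (k + 1)) / (((k : ℝ) + 1) + 1)) *
            ((K2 i / ((i : ℝ) + 1)) * P i *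
              ∏ j ∈ Finset.Icc (i + 1) k, (((j : ℝ) + K1 j + K2 j) / ((j : ℝ) + 1))) := by
        intro i hi
        have hle : i + 1 ≤ k + 1 := by
          have := Finset.mem_range.mp hi; omega
        rw [Finset.prod_Icc_succ_top hle]
        push_cast
        ring
      rw [Finset.sum_congr rfl hcong]
      push_cast
      ring
  -- Step 2: closed form for P0
  have h2 : ∀ m : ℕ, P0 m = P0 0 * Aprod K1 K2 m / (m.factorial : ℝ) - Ssum K1 K2 P m := by
    intro m
    induction m with
    | zero => simp [Aprod, Ssum]
    | succ k ih =>
      have hk : ((k : ℝ) + 1) ≠ 0 := by positivity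
      have hf : ((k.factorial : ℕ) : ℝ) ≠ 0 := Nat.cast_ne_zero.mpr k.factorial_ne_zero
      have hr : ((k : ℝ) + 1) * P0 (k + 1)
          = ((k : ℝ) + K1 k + K2 k) * P0 k - K2 k * P k := by
        linear_combination hCME0 k + K2 k * hP k
      rw [ih] at hr
      have hA : Aprod K1 K2 (k + 1) = Aprod K1 K2 k * ((k : ℝ) + K1 k + K2 k) :=
        Finset.prod_range_succ _ _
      have hfact : (((k + 1).factorial : ℕ) : ℝ) = ((k : ℝ) + 1) * (k.factorial : ℝ) := by
        rw [Nat.factorial_succ]; push_cast; ring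
      rw [hSrec k, hA, hfact]
      have hstep : P0 (k + 1) = (((k : ℝ) + K1 k + K2 k) *
            (P0 0 * Aprod K1 K2 k / (k.factorial : ℝ) - Ssum K1 K2 P k)
          - K2 k * P k) / ((k : ℝ) + 1) := by
        rw [eq_div_iff hk]; linear_combination hr
      rw [hstep]
      field_simp
      ring
  -- Conclusion
  intro n _
  have e1 := h1 n
  have e2 := h2 n
  have hp := hP n
  have hn1 : ((n : ℝ) + 1) ≠ 0 := by positivity
  have hfn : ((n.factorial : ℕ) : ℝ) ≠ 0 := Nat.cast_ne_zero.mpr n.factorial_ne_zero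
  have hfs : (((n + 1).factorial : ℕ) : ℝ) = ((n : ℝ) + 1) * (n.factorial : ℝ) := by
    rw [Nat.factorial_succ]; push_cast; ring
  show P (n + 1) = (K3 n / ((n : ℝ) + 1)) * P n
      + (K3 n / ((n : ℝ) + 1)) * Ssum K1 K2 P n
      - (K3 n / (((n + 1).factorial : ℕ) : ℝ)) * P0 0 * Aprod K1 K2 n
  rw [hfs]
  have hP1 : P1 n = P n - (P0 0 * Aprod K1 K2 n / (n.factorial : ℝ) - Ssum K1 K2 P n) := by
    rw [← e2]; linarith
  have hstep : P (n + 1) = (K3 n * P1 n) / ((n : ℝ) + 1) := by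
    rw [eq_div_iff hn1]; linear_combination e1
  rw [hstep, hP1]
  field_simp
  ring
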